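/- For every n ≥ 1 and m ≥ 1, and every tree T_n on n vertices, r(T_n, K_m) = (n-1)(m-1) + 1. -/

import Mathlib

open SimpleGraph Finset

/-- The graph `C` contains a copy of `G` (as a subgraph, via an injective map). -/
def ContainsCopy {V W : Type*} (C : SimpleGraph V) (G : SimpleGraph W) : Prop :=
  ∃ f : W ↪ V, ∀ u v : W, G.Adj u v → C.Adj (f u) (f v)

/-- `N` has the Ramsey property for `(G, H)`: every red-blue coloring of the edges of `K_N`
(given by the red graph `C`) contains a red copy of `G` or a blue copy of `H`. -/
def IsRamsey {α β : Type*} (G : SimpleGraph α) (H : SimpleGraph β) (N : ℕ) : Prop :=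
  ∀ C : SimpleGraph (Fin N), ContainsCopy C G ∨ ContainsCopy Cᶜ H

/-- The Ramsey number `r(G, H)`. -/
noncomputable def ramsey {α β : Type*} (G : SimpleGraph α) (H : SimpleGraph β) : ℕ :=
  sInf {N | IsRamsey G H N}

/-- The disjoint union of `t` copies of `H`. -/
def tCopies (t : ℕ) {β : Type*} (H : SimpleGraph β) : SimpleGraph (Fin t × β) where
  Adj a b := a.1 = b.1 ∧ H.Adj a.2 b.2
  symm := ⟨fun _ _ h => ⟨h.1.symm, h.2.symm⟩⟩
  loopless := ⟨fun _ h => H.irrefl h.2⟩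

universe u

set_option linter.unnecessarySimpa false




/-- classical neighbor finset -/
noncomputable def nbhd {N : ℕ} (C : SimpleGraph (Fin N)) (x : Fin N) : Finset (Fin N) :=
  (Set.toFinite (C.neighborSet x)).toFinset

@[simp] lemma mem_nbhd {N : ℕ} (C : SimpleGraph (Fin N)) (x y : Fin N) :
    y ∈ nbhd C x ↔ C.Adj x y := by
  simp [nbhd]

lemma adj_const_of_connected {V β : Type*} {T : SimpleGraph V} (hT : T.Connected)
    (g : V → β) (h : ∀ u v, T.Adj u v → g u = g v) (u v : V) : g u = g v := by
  obtain ⟨p⟩ := hT.preconnected u v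
  induction p with
  | nil => rfl
  | cons ha _ ih => exact (h _ _ ha).trans ih

lemma reachable_induce {V : Type u} {T : SimpleGraph V} {s : Set V} {a b : V}
    (p : T.Walk a b) (hp : ∀ x ∈ p.support, x ∈ s) (ha : a ∈ s) (hb : b ∈ s) :
    (T.induce s).Reachable ⟨a, ha⟩ ⟨b, hb⟩ := by
  induction p with
  | nil => exact Reachable.refl _
  | @cons a c b hac q ih =>
    have hc : c ∈ s := hp _ (by simp)
    have : (T.induce s).Adj ⟨a, ha⟩ ⟨c, hc⟩ := by
      simpa [SimpleGraph.comap] using hac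
    exact this.reachable.trans (ih (fun x hx => hp x (by simp [hx])) hc hb)


/-- an internal vertex of a path has two distinct neighbors -/
lemma internal_two_nbrs {V : Type u} {T : SimpleGraph V} {a b v : V}
    (p : T.Walk a b) (hp : p.IsPath) (hv : v ∈ p.support) (hva : v ≠ a) (hvb : v ≠ b) :
    ∃ x y, x ≠ y ∧ T.Adj v x ∧ T.Adj v y := by
  classical
  have hspec := p.take_spec hv
  set p1 := p.takeUntil v hv with hp1
  set p2 := p.dropUntil v hv with hp2
  have hnodup : (p1.support ++ p2.support.tail).Nodup := by
    rw [← SimpleGraph.Walk.support_append, hspec]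
    exact hp.support_nodup
  -- p1 : Walk a v with a ≠ v, so p1.reverse is a nonnil walk from v
  obtain ⟨x, hx1, hx2⟩ : ∃ x, T.Adj v x ∧ x ∈ p1.support := by
    cases h : p1.reverse with
    | nil => exact absurd rfl hva
    | @cons _ c _ hadj q =>
      refine ⟨c, hadj, ?_⟩
      have hc : c ∈ p1.reverse.support := by rw [h]; simp
      simpa using hc
  obtain ⟨y, hy1, hy2⟩ : ∃ y, T.Adj v y ∧ y ∈ p2.support.tail := by
    cases h : p2 with
    | nil => exact absurd rfl hvb
    | @cons _ c _ hadj q =>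
      exact ⟨c, hadj, by simp⟩
  refine ⟨x, y, ?_, hx1, hy1⟩
  intro hxy
  subst hxy
  exact (List.disjoint_of_nodup_append hnodup) hx2 hy2


lemma exists_leaf {V : Type u} [Fintype V] {T : SimpleGraph V} (hT : T.IsTree)
    (h2 : 2 ≤ Fintype.card V) : ∃ v u : V, T.Adj v u ∧ ∀ w, T.Adj v w → w = u := by
  classical
  have hsum : ∑ x : V, T.degree x = 2 * #T.edgeFinset :=
    SimpleGraph.sum_degrees_eq_twice_card_edges T
  have hedge : #T.edgeFinset + 1 = Fintype.card V := hT.card_edgeFinset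
  -- there is a vertex of degree ≤ 1
  obtain ⟨v, hv⟩ : ∃ v : V, T.degree v ≤ 1 := by
    by_contra h
    push_neg at h
    have : ∑ x : V, T.degree x ≥ ∑ _x : V, 2 :=
      Finset.sum_le_sum (fun x _ => h x)
    simp only [Finset.sum_const, smul_eq_mul, Finset.card_univ] at this
    omega
  -- v has a neighbor
  obtain ⟨w, hw⟩ : ∃ w, T.Adj v w := by
    obtain ⟨x, hx⟩ := Fintype.exists_ne_of_one_lt_card (by omega) v
    obtain ⟨p⟩ := hT.isConnected.preconnected v x
    cases p with
    | nil => exact absurd rfl hx.symm -- wrong direction maybe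
    | cons hadj _ => exact ⟨_, hadj⟩
  have hcard : #(T.neighborFinset v) = 1 := by
    have h1 : 1 ≤ #(T.neighborFinset v) :=
      Finset.card_pos.2 ⟨w, by simpa using hw⟩
    have := hv
    rw [SimpleGraph.degree] at this
    omega
  obtain ⟨u, hu⟩ := Finset.card_eq_one.1 hcard
  refine ⟨v, u, ?_, ?_⟩
  · have : u ∈ T.neighborFinset v := by simp [hu]
    simpa using this
  · intro w' hw'
    have : w' ∈ T.neighborFinset v := by simpa using hw'
    rw [hu] at this
    simpa using this

lemma isTree_induce_ne {V : Type u} [Fintype V] {T : SimpleGraph V} (hT : T.IsTree)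
    {v u : V} (hadj : T.Adj v u) (huniq : ∀ w, T.Adj v w → w = u) :
    (T.induce {x | x ≠ v}).IsTree := by
  classical
  constructor
  · -- connected
    rw [SimpleGraph.connected_iff]
    constructor
    · rintro ⟨a, ha⟩ ⟨b, hb⟩
      obtain ⟨q⟩ := hT.isConnected.preconnected a b
      let p := q.toPath
      have hvp : v ∉ (p : T.Walk a b).support := by
        intro hv
        obtain ⟨x, y, hxy, hx, hy⟩ :=
          internal_two_nbrs (p : T.Walk a b) p.2 hv (Ne.symm ha) (Ne.symm hb)
        exact hxy ((huniq x hx).trans (huniq y hy).symm)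
      refine reachable_induce (p : T.Walk a b) (fun x hx => ?_) ha hb
      intro hxv
      exact hvp (hxv ▸ hx)
    · exact ⟨⟨u, hadj.ne'⟩⟩
  · -- acyclic
    intro x c hc
    let emb := SimpleGraph.Embedding.induce (G := T) {x | x ≠ v}
    have hinj : Function.Injective emb.toHom := emb.injective
    exact hT.IsAcyclic _ (hc.map hinj)

lemma embed_tree : ∀ (n : ℕ) {V : Type u} [Fintype V] (T : SimpleGraph V),
    T.IsTree → Fintype.card V = n → ∀ {N : ℕ} (C : SimpleGraph (Fin N)), n ≤ N →
    (∀ x, n - 1 ≤ #(nbhd C x)) → ContainsCopy C T := by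
  intro n
  induction n using Nat.strong_induction_on with
  | _ n ih =>
    intro V _ T hT hcard N C hN hdeg
    classical
    match n, hN with
    | 0, _ =>
      obtain ⟨x⟩ := hT.isConnected.nonempty
      simp [Fintype.card_eq_zero_iff] at hcard
      exact hcard.elim x
    | 1, hN =>
      have hsub : Subsingleton V := by
        rw [← Fintype.card_le_one_iff_subsingleton]; omega
      refine ⟨⟨fun _ => ⟨0, by omega⟩, fun a b _ => Subsingleton.elim a b⟩, ?_⟩
      intro a b hab
      exact absurd (Subsingleton.elim a b) hab.ne
    | (k+2), hN =>
      obtain ⟨v, u, hadj, huniq⟩ := exists_leaf hT (by omega)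
      set s : Set V := {x | x ≠ v} with hs
      have hT' : (T.induce s).IsTree := isTree_induce_ne hT hadj huniq
      have hcard' : Fintype.card s = k + 1 := by
        have h := Fintype.card_subtype_compl (p := fun x : V => x = v)
        rw [Fintype.card_subtype_eq] at h
        have he : Fintype.card s = Fintype.card {x : V // ¬x = v} :=
          Fintype.card_congr (Equiv.subtypeEquivRight (by simp [hs]))
        omega
      obtain ⟨f', hf'⟩ := ih (k+1) (by omega) (T.induce s) hT' hcard' C (by omega)
        (fun x => le_trans (by omega) (hdeg x))
      -- the image of f'
      set img : Finset (Fin N) := Finset.univ.image f' with himg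
      have himgcard : #img = k + 1 := by
        rw [himg, Finset.card_image_of_injective _ f'.injective, Finset.card_univ, hcard']
      have hune : u ≠ v := hadj.ne'
      set fu : Fin N := f' ⟨u, hune⟩ with hfu
      -- find a fresh neighbor of fu
      have hfresh : ((nbhd C fu) \ img).Nonempty := by
        rw [Finset.sdiff_nonempty]
        intro hsub2
        have h1 : nbhd C fu ⊆ img.erase fu := by
          intro y hy
          refine Finset.mem_erase.2 ⟨?_, hsub2 hy⟩
          rintro rfl
          have : C.Adj fu fu := by simpa using hy
          exact C.irrefl this
        have h2 := Finset.card_le_card h1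
        have h3 := hdeg fu
        rw [Finset.card_erase_of_mem (by simp [himg]; exact ⟨u, hune, rfl⟩)] at h2
        omega
      obtain ⟨w, hw⟩ := hfresh
      have hwadj : C.Adj fu w := by
        have := (Finset.mem_sdiff.1 hw).1; simpa using this
      have hwimg : w ∉ img := (Finset.mem_sdiff.1 hw).2
      refine ⟨⟨fun x => if h : x = v then w else f' ⟨x, h⟩, ?_⟩, ?_⟩
      · intro a b hab
        simp only at hab
        by_cases ha : a = v <;> by_cases hb : b = v
        · rw [ha, hb]
        · rw [dif_pos ha, dif_neg hb] at hab
          exact absurd (show w ∈ img by rw [hab]; simp [himg]) hwimg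
        · rw [dif_neg ha, dif_pos hb] at hab
          exact absurd (show w ∈ img by rw [← hab]; simp [himg]) hwimg
        · rw [dif_neg ha, dif_neg hb] at hab
          simpa using congrArg Subtype.val (f'.injective hab)
      · intro a b hab
        show C.Adj (if ha : a = v then w else f' ⟨a, ha⟩) (if hb : b = v then w else f' ⟨b, hb⟩)
        by_cases ha : a = v <;> by_cases hb : b = v
        · exact absurd (ha.trans hb.symm) hab.ne
        · rw [dif_pos ha, dif_neg hb]
          subst ha
          have : b = u := huniq b hab
          subst this
          exact hwadj.symm
        · rw [dif_neg ha, dif_pos hb]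
          subst hb
          have : a = u := huniq a hab.symm
          subst this
          exact hwadj
        · rw [dif_neg ha, dif_neg hb]
          exact hf' ⟨a, ha⟩ ⟨b, hb⟩ (by simpa [SimpleGraph.comap] using hab)

lemma ramsey_upper {V : Type u} [Fintype V] {T : SimpleGraph V} {n : ℕ} (hn : 1 ≤ n)
    (hcard : Fintype.card V = n) (hT : T.IsTree) :
    ∀ (m N : ℕ), (n - 1) * (m - 1) + 1 ≤ N → ∀ C : SimpleGraph (Fin N),
      ContainsCopy C T ∨ ContainsCopy Cᶜ (⊤ : SimpleGraph (Fin m)) := by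
  intro m
  induction m with
  | zero =>
    intro N hN C
    exact Or.inr ⟨⟨Fin.elim0, fun a => a.elim0⟩, fun a => a.elim0⟩
  | succ m ih =>
    intro N hN C
    match m with
    | 0 =>
      -- single vertex, N ≥ 1
      refine Or.inr ⟨⟨fun _ => ⟨0, by omega⟩, fun a b _ => Fin.ext (by omega)⟩, ?_⟩
      intro a b hab
      exact absurd (Fin.ext (by omega) : a = b) hab.ne
    | m + 1 =>
      have hN' : (n-1) * (m+1) + 1 ≤ N := hN
      have hmul : (n-1) * (m+1) = (n-1) * m + (n-1) := Nat.mul_succ _ _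
      by_cases hdeg : ∀ x, n - 1 ≤ #(nbhd C x)
      · have hnN : n ≤ N := by omega
        exact Or.inl (embed_tree n T hT hcard C hnN hdeg)
      · push_neg at hdeg
        obtain ⟨v, hv⟩ := hdeg
        set B : Finset (Fin N) := nbhd Cᶜ v with hB
        set b : ℕ := #B with hb
        -- B ∪ nbhd C v = univ.erase v, disjoint
        have hBcard : b + #(nbhd C v) = N - 1 := by
          have hdisj : Disjoint B (nbhd C v) := by
            rw [Finset.disjoint_left]
            intro y hy1 hy2
            rw [hB] at hy1
            exact (by simpa using hy1 : Cᶜ.Adj v y).2 (by simpa using hy2)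
          have hun : B ∪ nbhd C v = Finset.univ.erase v := by
            ext y
            simp only [hB, Finset.mem_union, mem_nbhd, Finset.mem_erase, Finset.mem_univ,
              and_true, SimpleGraph.compl_adj]
            constructor
            · rintro (⟨h1, _⟩ | h1)
              · exact h1.symm
              · exact h1.ne'
            · intro h1
              by_cases h2 : C.Adj v y
              · exact Or.inr h2
              · exact Or.inl ⟨Ne.symm h1, h2⟩
          have := Finset.card_union_of_disjoint hdisj
          rw [hun, Finset.card_erase_of_mem (Finset.mem_univ v), Finset.card_univ,
            Fintype.card_fin] at this
          omega
        have hbge : (n - 1) * (m + 1 - 1) + 1 ≤ b := by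
          show (n-1) * m + 1 ≤ b
          omega
        -- pull back C to Fin b
        let e : Fin b ↪ Fin N :=
          (B.orderIsoOfFin rfl).toEquiv.toEmbedding.trans (Function.Embedding.subtype _)
        have heB : ∀ i, (e i : Fin N) ∈ B := fun i => (B.orderIsoOfFin rfl i).2
        rcases ih b hbge (C.comap e) with ⟨g, hg⟩ | ⟨g, hg⟩
        · exact Or.inl ⟨g.trans e, fun x y hxy => hg x y hxy⟩
        · -- extend the independent set with v
          have hvB : v ∉ B := by
            intro hvv
            rw [hB] at hvv
            exact Cᶜ.irrefl (by simpa using hvv : Cᶜ.Adj v v)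
          have hCc : ∀ i, Cᶜ.Adj v (e (g i)) := fun i => by
            have := heB (g i)
            rw [hB] at this
            simpa using this
          refine Or.inr ⟨⟨Fin.snoc (fun i => e (g i)) v, ?_⟩, ?_⟩
          · intro i j hij
            induction i using Fin.lastCases with
            | last =>
              induction j using Fin.lastCases with
              | last => rfl
              | cast j =>
                rw [Fin.snoc_last, Fin.snoc_castSucc] at hij
                exact absurd (hij ▸ heB (g j)) hvB
            | cast i =>
              induction j using Fin.lastCases with
              | last =>
                rw [Fin.snoc_last, Fin.snoc_castSucc] at hij
                exact absurd (hij ▸ heB (g i)) hvB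
              | cast j =>
                rw [Fin.snoc_castSucc, Fin.snoc_castSucc] at hij
                rw [g.injective (e.injective hij)]
          · intro i j hij
            have hne : i ≠ j := hij.ne
            show Cᶜ.Adj (Fin.snoc (α := fun _ => Fin N) (fun i => e (g i)) v i : Fin N)
              (Fin.snoc (α := fun _ => Fin N) (fun i => e (g i)) v j : Fin N)
            induction i using Fin.lastCases with
            | last =>
              induction j using Fin.lastCases with
              | last => exact absurd rfl hne
              | cast j =>
                rw [Fin.snoc_last, Fin.snoc_castSucc]
                exact hCc j
            | cast i =>
              induction j using Fin.lastCases with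
              | last =>
                rw [Fin.snoc_last, Fin.snoc_castSucc]
                exact (hCc i).symm
              | cast j =>
                rw [Fin.snoc_castSucc, Fin.snoc_castSucc]
                have hij' : i ≠ j := fun h => hne (by rw [h])
                have := hg i j (by simpa using hij')
                rw [SimpleGraph.compl_adj] at this ⊢
                exact ⟨fun h => this.1 (e.injective h), this.2⟩

lemma adj_const_of_connected' {V β : Type*} {T : SimpleGraph V} (hT : T.Connected)
    (g : V → β) (h : ∀ u v, T.Adj u v → g u = g v) (u v : V) : g u = g v := by
  obtain ⟨p⟩ := hT.preconnected u v
  induction p with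
  | nil => rfl
  | cons ha _ ih => exact (h _ _ ha).trans ih

theorem stmt10 {V : Type*} [Fintype V] (T : SimpleGraph V) (n m : ℕ)
    (hn : 1 ≤ n) (hm : 1 ≤ m) (hcard : Fintype.card V = n) (hT : T.IsTree) :
    ramsey T (⊤ : SimpleGraph (Fin m)) = (n - 1) * (m - 1) + 1 := by
  have hk : IsRamsey T (⊤ : SimpleGraph (Fin m)) ((n - 1) * (m - 1) + 1) :=
    fun C => ramsey_upper hn hcard hT m _ le_rfl C
  refine le_antisymm (Nat.sInf_le hk) (le_csInf ⟨_, hk⟩ ?_)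
  intro N hN
  by_contra hlt
  push_neg at hlt
  have hNle : N ≤ (n - 1) * (m - 1) := by omega
  -- build the counterexample coloring
  have hcardle : N ≤ Fintype.card (Fin (m-1) × Fin (n-1)) := by
    simp only [Fintype.card_prod, Fintype.card_fin]
    calc N ≤ (n-1) * (m-1) := hNle
    _ = (m-1) * (n-1) := Nat.mul_comm _ _
  obtain ⟨ι⟩ : Nonempty (Fin N ↪ Fin (m-1) × Fin (n-1)) :=
    Function.Embedding.nonempty_of_card_le (by simpa using hcardle)
  set D := tCopies (m-1) (⊤ : SimpleGraph (Fin (n-1))) with hD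
  have hDadj : ∀ a b, D.Adj a b ↔ (a.1 = b.1 ∧ a.2 ≠ b.2) := by
    intro a b
    rw [hD]
    show (a.1 = b.1 ∧ (⊤ : SimpleGraph (Fin (n-1))).Adj a.2 b.2) ↔ (a.1 = b.1 ∧ a.2 ≠ b.2)
    constructor
    · rintro ⟨h1, h2⟩; exact ⟨h1, by simpa using h2⟩
    · rintro ⟨h1, h2⟩; exact ⟨h1, by simpa using h2⟩
  rcases hN (D.comap ι) with ⟨f, hf⟩ | ⟨f, hf⟩
  · -- a red copy of T: impossible by connectivity
    have hconst : ∀ a b : V, (ι (f a)).1 = (ι (f b)).1 := by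
      refine adj_const_of_connected' hT.isConnected _ (fun a b hab => ?_)
      exact ((hDadj _ _).1 (hf a b hab)).1
    have hinj2 : Function.Injective (fun x : V => (ι (f x)).2) := by
      intro a b h2
      exact f.injective (ι.injective (Prod.ext (hconst a b) h2))
    have := Fintype.card_le_of_injective _ hinj2
    simp only [Fintype.card_fin, hcard] at this
    omega
  · -- a blue copy of K_m: impossible
    have hinj1 : Function.Injective (fun i : Fin m => (ι (f i)).1) := by
      intro i j h1
      by_contra hij
      have hadj := hf i j (by simpa using hij)
      rw [SimpleGraph.compl_adj] at hadj
      have hne : ι (f i) ≠ ι (f j) := fun h => hadj.1 (ι.injective h)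
      have h2 : (ι (f i)).2 ≠ (ι (f j)).2 := fun h2 => hne (Prod.ext h1 h2)
      exact hadj.2 ((hDadj _ _).2 ⟨h1, h2⟩)
    have := Fintype.card_le_of_injective _ hinj1
    simp only [Fintype.card_fin] at this
    omega
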